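/- arXiv:2105.14033 — 2 statements merged into one kernel-verified Lean document; each statement's English description precedes it below -/
import Mathlib

section
/- Fix k ≥ 1 and 0 < σ_{k−1} ≤ σ_k. Let X^{k−1}, X^k, S^k ∈ S^n with X^{k−1} ⪰ 0, X^k ⪰ 0, S^k ⪰ 0, and y^k ∈ R^m satisfy A*y^k + S^k − C = (1/σ_k)(X^k − X^{k−1}) and ⟨X^k, S^k⟩ = 0. Let X* ⪰ 0 with A(X*) = b, and set e^j = X^j − X* and r^j = A(X^j) − b for j ∈ {k−1, k}. Then ⟨C, (k−1)(X^{k−1} − X*) − k(X^k − X*)⟩ ≥ (1/(2σ_k))‖e^k‖² − (1/(2σ_{k−1}))‖e^{k−1}‖² + ⟨y^k, (k−1) r^{k−1} − k r^k⟩. -/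
set_option autoImplicit false

open Matrix Finset Filter
open scoped RealInnerProductSpace

noncomputable section

/-- The trace inner product `⟨X, Y⟩ = trace (Xᵀ * Y)` on real `n × n` matrices. -/
def mInner {n : ℕ} (X Y : Matrix (Fin n) (Fin n) ℝ) : ℝ := (Xᵀ * Y).trace

/-- The Frobenius norm induced by the trace inner product. -/
def mNorm {n : ℕ} (X : Matrix (Fin n) (Fin n) ℝ) : ℝ := Real.sqrt (mInner X X)

/-- `ℝ^m` with the Euclidean inner product. -/
abbrev Vec (m : ℕ) := EuclideanSpace ℝ (Fin m)

lemma mInner_comm {n : ℕ} (X Y : Matrix (Fin n) (Fin n) ℝ) : mInner X Y = mInner Y X := by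
  unfold mInner
  rw [← Matrix.trace_transpose (Xᵀ * Y), Matrix.transpose_mul, Matrix.transpose_transpose]

lemma mInner_add_left {n : ℕ} (X Y Z : Matrix (Fin n) (Fin n) ℝ) :
    mInner (X + Y) Z = mInner X Z + mInner Y Z := by
  simp [mInner, Matrix.transpose_add, Matrix.add_mul]

lemma mInner_sub_left {n : ℕ} (X Y Z : Matrix (Fin n) (Fin n) ℝ) :
    mInner (X - Y) Z = mInner X Z - mInner Y Z := by
  simp [mInner, Matrix.transpose_sub, Matrix.sub_mul]

lemma mInner_smul_left {n : ℕ} (c : ℝ) (X Z : Matrix (Fin n) (Fin n) ℝ) :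
    mInner (c • X) Z = c * mInner X Z := by
  simp [mInner, Matrix.transpose_smul, Matrix.smul_mul]

lemma mInner_add_right {n : ℕ} (X Y Z : Matrix (Fin n) (Fin n) ℝ) :
    mInner X (Y + Z) = mInner X Y + mInner X Z := by
  simp [mInner, Matrix.mul_add]

lemma mInner_sub_right {n : ℕ} (X Y Z : Matrix (Fin n) (Fin n) ℝ) :
    mInner X (Y - Z) = mInner X Y - mInner X Z := by
  simp [mInner, Matrix.mul_sub]

lemma mInner_smul_right {n : ℕ} (c : ℝ) (X Z : Matrix (Fin n) (Fin n) ℝ) :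
    mInner X (c • Z) = c * mInner X Z := by
  simp [mInner, Matrix.mul_smul]

lemma mInner_self_nonneg {n : ℕ} (X : Matrix (Fin n) (Fin n) ℝ) : 0 ≤ mInner X X := by
  unfold mInner
  rw [Matrix.trace]
  refine Finset.sum_nonneg fun i _ => ?_
  rw [Matrix.diag_apply, Matrix.mul_apply]
  exact Finset.sum_nonneg fun j _ => mul_self_nonneg _

lemma transpose_eq_of_posSemidef {n : ℕ} {X : Matrix (Fin n) (Fin n) ℝ}
    (hX : X.PosSemidef) : Xᵀ = X := by
  ext i j
  have h := congrFun (congrFun hX.isHermitian i) j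
  simpa [Matrix.conjTranspose_apply] using h

lemma mInner_nonneg_of_posSemidef {n : ℕ} {X S : Matrix (Fin n) (Fin n) ℝ}
    (hX : X.PosSemidef) (hS : S.PosSemidef) : 0 ≤ mInner X S := by
  have hXt := transpose_eq_of_posSemidef hX
  open scoped MatrixOrder in
  have hP := (CFC.sqrt_nonneg X).posSemidef
  open scoped MatrixOrder in
  have hQ := (CFC.sqrt_nonneg S).posSemidef
  open scoped MatrixOrder in
  set P := CFC.sqrt X with hPdef
  open scoped MatrixOrder in
  set Q := CFC.sqrt S with hQdef
  open scoped MatrixOrder in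
  have hPX : P * P = X := CFC.sqrt_mul_sqrt_self X hX.nonneg
  open scoped MatrixOrder in
  have hQS : Q * Q = S := CFC.sqrt_mul_sqrt_self S hS.nonneg
  have key : mInner X S = mInner (P * Q) (P * Q) := by
    unfold mInner
    rw [hXt, ← hPX, ← hQS, Matrix.transpose_mul, transpose_eq_of_posSemidef hP,
      transpose_eq_of_posSemidef hQ]
    calc (P * P * (Q * Q)).trace
        = ((P * (P * Q)) * Q).trace := by rw [show P * P * (Q * Q) = (P * (P * Q)) * Q by
            noncomm_ring]
      _ = (Q * (P * (P * Q))).trace := Matrix.trace_mul_comm _ _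
      _ = ((Q * P) * (P * Q)).trace := by rw [← mul_assoc]
  rw [key]
  exact mInner_self_nonneg _

lemma sq_mNorm {n : ℕ} (X : Matrix (Fin n) (Fin n) ℝ) : mNorm X ^ 2 = mInner X X :=
  Real.sq_sqrt (mInner_self_nonneg X)

/-- the telescoping inequality (eq. `thm-iPGM-3` in the paper) for one iPGM step. -/
theorem ipgm_telescoping_inequality {n m : ℕ}
    (A : Matrix (Fin n) (Fin n) ℝ →ₗ[ℝ] Vec m)
    (Aadj : Vec m →ₗ[ℝ] Matrix (Fin n) (Fin n) ℝ)
    (hadj : ∀ (X : Matrix (Fin n) (Fin n) ℝ) (ξ : Vec m), ⟪A X, ξ⟫ = mInner X (Aadj ξ))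
    (b : Vec m) (C : Matrix (Fin n) (Fin n) ℝ) (hC : C.IsSymm)
    (k : ℕ) (hk : 1 ≤ k)
    (σkm1 σk : ℝ) (hσkm1 : 0 < σkm1) (hσle : σkm1 ≤ σk)
    (Xkm1 Xk Sk : Matrix (Fin n) (Fin n) ℝ)
    (hXkm1 : Xkm1.PosSemidef) (hXk : Xk.PosSemidef) (hSk : Sk.PosSemidef)
    (yk : Vec m)
    (heq : Aadj yk + Sk - C = (1 / σk) • (Xk - Xkm1))
    (hcomp : mInner Xk Sk = 0)
    (Xstar : Matrix (Fin n) (Fin n) ℝ) (hXstar : Xstar.PosSemidef)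
    (hAXstar : A Xstar = b) :
    mInner C (((k : ℝ) - 1) • (Xkm1 - Xstar) - (k : ℝ) • (Xk - Xstar)) ≥
      (1 / (2 * σk)) * mNorm (Xk - Xstar) ^ 2
        - (1 / (2 * σkm1)) * mNorm (Xkm1 - Xstar) ^ 2
        + ⟪yk, ((k : ℝ) - 1) • (A Xkm1 - b) - (k : ℝ) • (A Xk - b)⟫ := by
  have hσk : 0 < σk := lt_of_lt_of_le hσkm1 hσle
  set E := Xk - Xstar with hE
  set F := Xkm1 - Xstar with hF
  set D := ((k : ℝ) - 1) • F - (k : ℝ) • E with hD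
  clear_value E F
  have hC' : C = Aadj yk + Sk - (1 / σk) • (Xk - Xkm1) := by
    rw [← heq]; abel
  -- scalar abbreviations
  set qE := mInner E E with hqE
  set qF := mInner F F with hqF
  set p := mInner E F with hp
  -- expansion of mInner C D
  have hsplit : mInner C D = mInner (Aadj yk) D + mInner Sk D
      - (1 / σk) * mInner (Xk - Xkm1) D := by
    rw [hC', mInner_sub_left, mInner_add_left, mInner_smul_left]
  -- adjoint term
  have hAD : A D = ((k : ℝ) - 1) • (A Xkm1 - b) - (k : ℝ) • (A Xk - b) := by
    rw [hD, hF, hE]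
    simp only [map_sub, LinearMap.map_smul, hAXstar]
  have hterm1 : mInner (Aadj yk) D
      = ⟪yk, ((k : ℝ) - 1) • (A Xkm1 - b) - (k : ℝ) • (A Xk - b)⟫ := by
    rw [mInner_comm, ← hadj, hAD, real_inner_comm]
  -- Sk term
  have hSkXkm1 : 0 ≤ mInner Sk Xkm1 := mInner_nonneg_of_posSemidef hSk hXkm1
  have hSkXstar : 0 ≤ mInner Sk Xstar := mInner_nonneg_of_posSemidef hSk hXstar
  have hSkXk : mInner Sk Xk = 0 := by rw [mInner_comm]; exact hcomp
  have hterm2 : mInner Sk D = ((k : ℝ) - 1) * mInner Sk Xkm1 + mInner Sk Xstar := by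
    rw [hD, hF, hE, mInner_sub_right, mInner_smul_right, mInner_smul_right,
      mInner_sub_right, mInner_sub_right, hSkXk]
    ring
  have hterm2' : 0 ≤ mInner Sk D := by
    rw [hterm2]
    have hk1 : (1 : ℝ) ≤ (k : ℝ) := by exact_mod_cast hk
    have : 0 ≤ ((k : ℝ) - 1) * mInner Sk Xkm1 :=
      mul_nonneg (by linarith) hSkXkm1
    linarith
  -- quadratic term
  have hXkXkm1 : Xk - Xkm1 = E - F := by rw [hE, hF]; abel
  have hterm3 : mInner (Xk - Xkm1) D = (2 * (k : ℝ) - 1) * p - (k : ℝ) * qE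
      - ((k : ℝ) - 1) * qF := by
    rw [hXkXkm1, hD, mInner_sub_left, mInner_sub_right, mInner_sub_right,
      mInner_smul_right, mInner_smul_right, mInner_smul_right, mInner_smul_right,
      ← hqE, ← hqF, ← hp, mInner_comm F E, ← hp]
    ring
  have hEF : 0 ≤ qE - 2 * p + qF := by
    have h := mInner_self_nonneg (E - F)
    rw [mInner_sub_left, mInner_sub_right, mInner_sub_right, mInner_comm F E] at h
    rw [← hqE, ← hqF, ← hp] at h
    linarith
  have hqFnn : 0 ≤ qF := mInner_self_nonneg F
  -- norms
  rw [sq_mNorm, sq_mNorm, ← hqE, ← hqF, hsplit, hterm1, hterm3]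
  have hk1 : (1 : ℝ) ≤ (k : ℝ) := by exact_mod_cast hk
  have t1 : 0 ≤ (1 / σk) * (((k : ℝ) - 1 / 2) * (qE - 2 * p + qF)) := by
    apply mul_nonneg (by positivity)
    apply mul_nonneg (by linarith) hEF
  have t2 : (1 / (2 * σk)) * qF ≤ (1 / (2 * σkm1)) * qF := by
    apply mul_le_mul_of_nonneg_right _ hqFnn
    apply one_div_le_one_div_of_le (by linarith) (by linarith)
  have expand : (1 / σk) * (((k : ℝ) - 1 / 2) * (qE - 2 * p + qF))
      = -(1 / σk) * ((2 * (k : ℝ) - 1) * p - (k : ℝ) * qE - ((k : ℝ) - 1) * qF)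
        - (1 / (2 * σk)) * qE + (1 / (2 * σk)) * qF := by
    field_simp
    ring
  linarith [hterm2', t1, t2, expand ▸ t1]
end
end

section
/- Let A : S^n → R^m be a surjective linear map (so AA* is nonsingular), and suppose there exists a positive definite X† ∈ S^n with A(X†) = b (Slater condition). Let Z ∈ S^n and define φ(ξ) = ½‖Π_{S^n_+}(A*ξ + Z)‖² − ⟨b, ξ⟩. Then for every ξ⁰ ∈ R^m the level set { ξ ∈ R^m : φ(ξ) ≤ φ(ξ⁰) } is compact. -/
set_option autoImplicit false

open Matrix Finset Filter
open scoped RealInnerProductSpace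

noncomputable section

/-- `P` is the (unique) nearest positive semidefinite matrix to `Z` in the Frobenius norm,
i.e. the projection of `Z` onto the PSD cone. -/
def IsProjPSD {n : ℕ} (Z P : Matrix (Fin n) (Fin n) ℝ) : Prop :=
  P.PosSemidef ∧
    ∀ Y : Matrix (Fin n) (Fin n) ℝ, Y.PosSemidef → mNorm (P - Z) ≤ mNorm (Y - Z)

abbrev Emat (n : ℕ) := EuclideanSpace ℝ (Fin n × Fin n)

def toE {n : ℕ} : Matrix (Fin n) (Fin n) ℝ ≃ₗ[ℝ] Emat n where
  toFun X := WithLp.toLp 2 fun p : Fin n × Fin n => X p.1 p.2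
  invFun y := Matrix.of fun i j => y (i, j)
  map_add' X Y := rfl
  map_smul' c X := rfl
  left_inv X := rfl
  right_inv y := rfl

lemma toE_apply {n : ℕ} (X : Matrix (Fin n) (Fin n) ℝ) (p : Fin n × Fin n) :
    toE X p = X p.1 p.2 := rfl

lemma toE_symm_apply {n : ℕ} (y : Emat n) (i j : Fin n) : toE.symm y i j = y (i, j) := rfl

lemma mInner_eq_sum {n : ℕ} (X Y : Matrix (Fin n) (Fin n) ℝ) :
    mInner X Y = ∑ p : Fin n × Fin n, X p.1 p.2 * Y p.1 p.2 := by
  rw [mInner, Matrix.trace, Fintype.sum_prod_type]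
  simp [Matrix.diag, Matrix.mul_apply, Matrix.transpose_apply]
  exact Finset.sum_comm

lemma inner_toE {n : ℕ} (X Y : Matrix (Fin n) (Fin n) ℝ) :
    ⟪toE X, toE Y⟫ = mInner X Y := by
  rw [mInner_eq_sum]
  simp [PiLp.inner_apply, toE_apply, mul_comm]

lemma norm_toE {n : ℕ} (X : Matrix (Fin n) (Fin n) ℝ) : ‖toE X‖ = mNorm X := by
  rw [mNorm, ← inner_toE, real_inner_self_eq_norm_sq, Real.sqrt_sq (norm_nonneg _)]

lemma psd_smul {n : ℕ} {A : Matrix (Fin n) (Fin n) ℝ} (hA : A.PosSemidef) {t : ℝ}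
    (ht : 0 ≤ t) : (t • A).PosSemidef := by
  refine PosSemidef.of_dotProduct_mulVec_nonneg ?_ fun x => ?_
  · unfold Matrix.IsHermitian
    rw [conjTranspose_smul, hA.1]
    simp
  · rw [smul_mulVec, dotProduct_smul]
    exact mul_nonneg ht (hA.dotProduct_mulVec_nonneg x)

lemma psd_vecMulVec {n : ℕ} (x : Fin n → ℝ) : (vecMulVec x x).PosSemidef := by
  refine PosSemidef.of_dotProduct_mulVec_nonneg ?_ fun y => ?_
  · unfold Matrix.IsHermitian
    ext i j
    simp [vecMulVec_apply, mul_comm]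
  · have : vecMulVec x x *ᵥ y = (x ⬝ᵥ y) • x := by
      ext i
      simp only [mulVec, vecMulVec_apply, dotProduct, Pi.smul_apply, smul_eq_mul, Finset.sum_mul, Finset.mul_sum]
      exact Finset.sum_congr rfl fun j _ => by ring
    rw [this]
    simp only [star_trivial, dotProduct_smul, smul_eq_mul]
    rw [dotProduct_comm]
    exact mul_self_nonneg _

lemma isHermitian_of_isSymm {n : ℕ} {A : Matrix (Fin n) (Fin n) ℝ} (h : A.IsSymm) :
    A.IsHermitian := by
  unfold Matrix.IsHermitian
  rw [conjTranspose_eq_transpose_of_trivial]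
  exact h

lemma mInner_vecMulVec {n : ℕ} (N : Matrix (Fin n) (Fin n) ℝ) (x : Fin n → ℝ) :
    mInner N (vecMulVec x x) = x ⬝ᵥ N *ᵥ x := by
  rw [mInner_eq_sum, Fintype.sum_prod_type]
  simp only [vecMulVec_apply, dotProduct, mulVec]
  exact Finset.sum_congr rfl fun i _ => by
    rw [Finset.mul_sum]
    exact Finset.sum_congr rfl fun j _ => by ring

lemma psd_of_dual {n : ℕ} {N : Matrix (Fin n) (Fin n) ℝ} (hsymm : N.IsSymm)
    (h : ∀ Q : Matrix (Fin n) (Fin n) ℝ, Q.PosSemidef → 0 ≤ mInner N Q) :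
    N.PosSemidef := by
  refine PosSemidef.of_dotProduct_mulVec_nonneg (isHermitian_of_isSymm hsymm) fun x => ?_
  have := h _ (psd_vecMulVec x)
  rwa [mInner_vecMulVec] at this

lemma diag_conj {n : ℕ} (B X : Matrix (Fin n) (Fin n) ℝ) (i : Fin n) :
    (B * X * Bᴴ) i i = (B i) ⬝ᵥ X *ᵥ (B i) := by
  simp only [mul_apply, conjTranspose_apply, dotProduct, mulVec, star_trivial,
    Finset.sum_mul, Finset.mul_sum]
  rw [Finset.sum_comm]
  exact Finset.sum_congr rfl fun j _ => Finset.sum_congr rfl fun k _ => by ring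

lemma mInner_posDef_pos {n : ℕ} {X N : Matrix (Fin n) (Fin n) ℝ} (hX : X.PosDef)
    (hN : N.PosSemidef) (hne : N ≠ 0) : 0 < mInner X N := by
  obtain ⟨B, rfl⟩ : ∃ B : Matrix (Fin n) (Fin n) ℝ, N = Bᴴ * B := by
    open scoped MatrixOrder in
    simpa only [star_eq_conjTranspose] using CStarAlgebra.nonneg_iff_eq_star_mul_self.mp hN.nonneg
  have hXs : Xᵀ = X := by
    have := hX.1
    unfold Matrix.IsHermitian at this
    rwa [conjTranspose_eq_transpose_of_trivial] at this
  have key : mInner X (Bᴴ * B) = (B * X * Bᴴ).trace := by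
    rw [mInner, hXs, ← Matrix.mul_assoc, Matrix.trace_mul_comm, ← Matrix.mul_assoc]
  rw [key, Matrix.trace]
  have hBne : ∃ i, B i ≠ 0 := by
    by_contra hc
    push_neg at hc
    apply hne
    have : B = 0 := by ext i j; exact congrFun (hc i) j
    rw [this]
    simp
  obtain ⟨i0, hi0⟩ := hBne
  refine Finset.sum_pos' (fun i _ => ?_) ⟨i0, Finset.mem_univ i0, ?_⟩
  · rw [Matrix.diag_apply, diag_conj]
    simpa using hX.posSemidef.dotProduct_mulVec_nonneg (B i)
  · rw [Matrix.diag_apply, diag_conj]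
    simpa using hX.dotProduct_mulVec_pos hi0

lemma var_ineq {n : ℕ} {Y P : Matrix (Fin n) (Fin n) ℝ} (hP : IsProjPSD Y P)
    {Q : Matrix (Fin n) (Fin n) ℝ} (hQ : Q.PosSemidef) :
    ⟪toE Y - toE P, toE Q - toE P⟫ ≤ 0 := by
  set u : Emat n := toE Y - toE P with hu
  set w : Emat n := toE Q - toE P with hw
  have key : ∀ t : ℝ, 0 < t → t ≤ 1 → ⟪u, w⟫ ≤ t / 2 * ‖w‖ ^ 2 := by
    intro t ht ht1
    have hR : ((1 - t) • P + t • Q).PosSemidef :=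
      (psd_smul hP.1 (by linarith)).add (psd_smul hQ ht.le)
    have h2 := hP.2 _ hR
    rw [← norm_toE, ← norm_toE, map_sub, map_sub] at h2
    have hPY : toE P - toE Y = -u := by rw [hu]; abel
    have hRe : toE ((1 - t) • P + t • Q) - toE Y = -u + t • w := by
      rw [map_add, _root_.map_smul, _root_.map_smul, hu, hw]
      module
    rw [hPY, hRe] at h2
    have h3 : ‖-u‖ ≤ ‖-u + t • w‖ := by rwa [norm_neg, ← norm_neg u] at h2
    have h4 : ‖-u + t • w‖ ^ 2 = ‖u‖ ^ 2 - 2 * (t * ⟪u, w⟫) + t ^ 2 * ‖w‖ ^ 2 := by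
      rw [norm_add_sq_real, norm_neg, inner_neg_left, real_inner_smul_right,
        norm_smul, mul_pow]
      simp [abs_of_pos ht]
      ring
    have h5 : ‖u‖ ^ 2 ≤ ‖-u + t • w‖ ^ 2 := by
      rw [← norm_neg u]
      exact pow_le_pow_left₀ (norm_nonneg _) h3 2
    rw [h4] at h5
    nlinarith
  by_contra hcon
  push_neg at hcon
  have hwpos : 0 < ‖w‖ ^ 2 := by
    rcases eq_or_lt_of_le (norm_nonneg w) with h | h
    · exfalso
      have : w = 0 := by rwa [eq_comm, norm_eq_zero] at h
      rw [this, inner_zero_right] at hcon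
      exact lt_irrefl _ hcon
    · positivity
  set t : ℝ := min 1 (⟪u, w⟫ / ‖w‖ ^ 2) with htdef
  have ht0 : 0 < t := lt_min one_pos (div_pos hcon hwpos)
  have ht1 : t ≤ 1 := min_le_left _ _
  have := key t ht0 ht1
  have h6 : t ≤ ⟪u, w⟫ / ‖w‖ ^ 2 := min_le_right _ _
  have h7 : t / 2 * ‖w‖ ^ 2 ≤ ⟪u, w⟫ / 2 := by
    rw [div_mul_eq_mul_div, div_le_div_iff₀ two_pos two_pos]
    calc t * ‖w‖ ^ 2 * 2 ≤ (⟪u, w⟫ / ‖w‖ ^ 2) * ‖w‖ ^ 2 * 2 := by nlinarith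
    _ = ⟪u, w⟫ * 2 := by rw [div_mul_cancel₀ _ hwpos.ne']
  linarith

lemma proj_orth {n : ℕ} {Y P : Matrix (Fin n) (Fin n) ℝ} (hP : IsProjPSD Y P) :
    ⟪toE Y - toE P, toE P⟫ = 0 := by
  have h1 := var_ineq hP Matrix.PosSemidef.zero
  have h2 := var_ineq hP (psd_smul hP.1 (by norm_num : (0:ℝ) ≤ 2))
  rw [map_zero, zero_sub, inner_neg_right] at h1
  rw [_root_.map_smul] at h2
  have : (2 : ℝ) • toE P - toE P = toE P := by module
  rw [this] at h2
  linarith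

lemma proj_dual {n : ℕ} {Y P : Matrix (Fin n) (Fin n) ℝ} (hP : IsProjPSD Y P)
    {Q : Matrix (Fin n) (Fin n) ℝ} (hQ : Q.PosSemidef) :
    ⟪toE Y - toE P, toE Q⟫ ≤ 0 := by
  have h1 := var_ineq hP hQ
  have h2 := proj_orth hP
  rw [inner_sub_right] at h1
  linarith

lemma proj_isSymm {n : ℕ} {Y P : Matrix (Fin n) (Fin n) ℝ} (hP : IsProjPSD Y P) :
    P.IsSymm := by
  have := hP.1.1
  unfold Matrix.IsHermitian at this
  rwa [conjTranspose_eq_transpose_of_trivial] at this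

lemma proj_residual_psd {n : ℕ} {Y P : Matrix (Fin n) (Fin n) ℝ} (hP : IsProjPSD Y P)
    (hY : Y.IsSymm) : (P - Y).PosSemidef := by
  refine psd_of_dual ?_ fun Q hQ => ?_
  · unfold Matrix.IsSymm at *
    rw [transpose_sub, proj_isSymm hP, hY]
  · have h := proj_dual hP hQ
    rw [← inner_toE, map_sub]
    have : toE P - toE Y = -(toE Y - toE P) := by abel
    rw [this, inner_neg_left]
    linarith

lemma proj_lipschitz {n : ℕ} {Y₁ Y₂ P₁ P₂ : Matrix (Fin n) (Fin n) ℝ}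
    (h1 : IsProjPSD Y₁ P₁) (h2 : IsProjPSD Y₂ P₂) :
    ‖toE P₁ - toE P₂‖ ≤ ‖toE Y₁ - toE Y₂‖ := by
  have a1 := var_ineq h1 h2.1
  have a2 := var_ineq h2 h1.1
  have key : ‖toE P₁ - toE P₂‖ ^ 2 ≤ ⟪toE Y₁ - toE Y₂, toE P₁ - toE P₂⟫ := by
    have e1 : ⟪toE Y₁ - toE P₁, toE P₂ - toE P₁⟫ ≤ 0 := a1
    have e2 : ⟪toE Y₂ - toE P₂, toE P₁ - toE P₂⟫ ≤ 0 := a2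
    have expand : ⟪toE Y₁ - toE Y₂, toE P₁ - toE P₂⟫ - ‖toE P₁ - toE P₂‖ ^ 2
        = -⟪toE Y₁ - toE P₁, toE P₂ - toE P₁⟫ - ⟪toE Y₂ - toE P₂, toE P₁ - toE P₂⟫ := by
      rw [← real_inner_self_eq_norm_sq]
      simp only [inner_sub_left, inner_sub_right]
      ring
    linarith
  have cs : ⟪toE Y₁ - toE Y₂, toE P₁ - toE P₂⟫ ≤ ‖toE Y₁ - toE Y₂‖ * ‖toE P₁ - toE P₂‖ :=
    real_inner_le_norm _ _
  rcases eq_or_lt_of_le (norm_nonneg (toE P₁ - toE P₂)) with h | h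
  · rw [← h]; exact norm_nonneg _
  · nlinarith

lemma continuous_evalE {n : ℕ} (p : Fin n × Fin n) :
    Continuous (fun y : Emat n => y p) :=
  (continuous_apply p).comp (PiLp.continuous_ofLp ..)

lemma isClosed_psdE {n : ℕ} :
    IsClosed {y : Emat n | (toE.symm y).PosSemidef} := by
  have hrep : {y : Emat n | (toE.symm y).PosSemidef} =
      (⋂ p : Fin n × Fin n, {y : Emat n | y (p.2, p.1) = y (p.1, p.2)}) ∩
      ⋂ x : Fin n → ℝ, {y : Emat n | 0 ≤ ∑ j, x j * ∑ k, y (j, k) * x k} := by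
    ext y
    rw [Set.mem_setOf_eq, posSemidef_iff_dotProduct_mulVec]
    constructor
    · rintro ⟨hH, hq⟩
      refine ⟨Set.mem_iInter.2 fun p => ?_, Set.mem_iInter.2 fun x => ?_⟩
      · have := congrFun (congrFun hH p.1) p.2
        simpa [Matrix.conjTranspose_apply, toE_symm_apply] using this
      · have := hq x
        simpa [dotProduct, Matrix.mulVec, Finset.mul_sum, toE_symm_apply] using this
    · rintro ⟨hH, hq⟩
      refine ⟨?_, fun x => ?_⟩
      · ext i j
        have := Set.mem_iInter.1 hH (i, j)
        simpa [Matrix.conjTranspose_apply, toE_symm_apply] using this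
      · have := Set.mem_iInter.1 hq x
        simpa [dotProduct, Matrix.mulVec, Finset.mul_sum, toE_symm_apply] using this
  rw [hrep]
  refine IsClosed.inter (isClosed_iInter fun p => ?_) (isClosed_iInter fun x => ?_)
  · exact isClosed_eq (continuous_evalE _) (continuous_evalE _)
  · refine isClosed_le continuous_const ?_
    refine continuous_finset_sum _ fun j _ => Continuous.mul continuous_const ?_
    exact continuous_finset_sum _ fun k _ => (continuous_evalE _).mul continuous_const

lemma mNorm_eq_zero {n : ℕ} {N : Matrix (Fin n) (Fin n) ℝ} (h : N = 0) : mNorm N = 0 := by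
  rw [← norm_toE, h, map_zero, norm_zero]

lemma exists_psd_lower {n : ℕ} {X : Matrix (Fin n) (Fin n) ℝ} (hX : X.PosDef) :
    ∃ c > 0, ∀ N : Matrix (Fin n) (Fin n) ℝ, N.PosSemidef → c * mNorm N ≤ mInner X N := by
  set K : Set (Emat n) :=
    {y : Emat n | (toE.symm y).PosSemidef} ∩ Metric.sphere 0 1 with hK
  have hKcpt : IsCompact K := (isCompact_sphere 0 1).inter_left isClosed_psdE
  have memK : ∀ N : Matrix (Fin n) (Fin n) ℝ, N.PosSemidef → N ≠ 0 →
      ‖toE N‖⁻¹ • toE N ∈ K ∧ 0 < ‖toE N‖ := by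
    intro N hN hne
    have hEne : toE N ≠ 0 := fun h => hne (by simpa using congrArg toE.symm h)
    have hpos : 0 < ‖toE N‖ := norm_pos_iff.2 hEne
    constructor
    · constructor
      · show (toE.symm (‖toE N‖⁻¹ • toE N)).PosSemidef
        rw [_root_.map_smul, LinearEquiv.symm_apply_apply]
        exact psd_smul hN (by positivity)
      · simp [norm_smul, abs_of_pos (inv_pos.2 hpos), inv_mul_cancel₀ (ne_of_gt hpos)]
    · exact hpos
  by_cases hKne : K.Nonempty
  · have hf : ContinuousOn (fun y : Emat n => ⟪toE X, y⟫) K :=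
      (continuous_const.inner continuous_id).continuousOn
    obtain ⟨y₀, hy₀K, hy₀min⟩ := hKcpt.exists_isMinOn hKne hf
    refine ⟨⟪toE X, y₀⟫, ?_, ?_⟩
    · have hN₀ : (toE.symm y₀).PosSemidef := hy₀K.1
      have hy₀ne : y₀ ≠ 0 := by
        intro h
        have := hy₀K.2
        rw [h] at this
        simp at this
      have hN₀ne : toE.symm y₀ ≠ 0 := fun h => hy₀ne (by simpa using congrArg toE h)
      have : ⟪toE X, y₀⟫ = mInner X (toE.symm y₀) := by
        rw [← inner_toE, LinearEquiv.apply_symm_apply]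
      rw [this]
      exact mInner_posDef_pos hX hN₀ hN₀ne
    · intro N hN
      by_cases hne : N = 0
      · rw [mNorm_eq_zero hne, hne, mul_zero]
        rw [mInner_eq_sum]
        simp
      · obtain ⟨hmem, hpos⟩ := memK N hN hne
        have h9 : ⟪toE X, y₀⟫ ≤ ‖toE N‖⁻¹ * ⟪toE X, toE N⟫ := by
          have := hy₀min hmem
          simpa [real_inner_smul_right, Finset.mul_sum, mul_left_comm] using this
        rw [← norm_toE, ← inner_toE]
        calc ⟪toE X, y₀⟫ * ‖toE N‖ ≤ (‖toE N‖⁻¹ * ⟪toE X, toE N⟫) * ‖toE N‖ := by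
              exact mul_le_mul_of_nonneg_right h9 hpos.le
        _ = ⟪toE X, toE N⟫ := by field_simp
  · refine ⟨1, one_pos, fun N hN => ?_⟩
    have hne : N = 0 := by
      by_contra h
      exact hKne ⟨_, (memK N hN h).1⟩
    rw [mNorm_eq_zero hne, hne, mul_zero, mInner_eq_sum]
    simp

set_option maxHeartbeats 1000000 in
/-- under surjectivity of `A` and the Slater condition, the level sets of
`φ(ξ) = ½‖Π_{S^n_+}(A*ξ + Z)‖² − ⟨b, ξ⟩` are compact. -/
theorem phi_level_sets_compact {n m : ℕ}
    (A : Matrix (Fin n) (Fin n) ℝ →ₗ[ℝ] Vec m)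
    (Aadj : Vec m →ₗ[ℝ] Matrix (Fin n) (Fin n) ℝ)
    (hadj : ∀ (X : Matrix (Fin n) (Fin n) ℝ) (ξ : Vec m), ⟪A X, ξ⟫ = mInner X (Aadj ξ))
    (hAadjSymm : ∀ ξ : Vec m, (Aadj ξ).IsSymm)
    (hsurj : Function.Surjective ⇑A)
    (b : Vec m)
    -- Slater condition
    (Xdag : Matrix (Fin n) (Fin n) ℝ) (hXdag : Xdag.PosDef) (hAXdag : A Xdag = b)
    (Z : Matrix (Fin n) (Fin n) ℝ) (hZ : Z.IsSymm)
    (proj : Matrix (Fin n) (Fin n) ℝ → Matrix (Fin n) (Fin n) ℝ)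
    (hproj : ∀ Y : Matrix (Fin n) (Fin n) ℝ, IsProjPSD Y (proj Y)) :
    let φ : Vec m → ℝ := fun ξ => (1 / 2) * mNorm (proj (Aadj ξ + Z)) ^ 2 - ⟪b, ξ⟫
    ∀ ξ0 : Vec m, IsCompact {ξ : Vec m | φ ξ ≤ φ ξ0} := by
  intro φ ξ0
  classical
  -- continuity of φ
  have hFlip : LipschitzWith 1 (fun y : Emat n => toE (proj (toE.symm y))) := by
    apply LipschitzWith.of_dist_le_mul
    intro y₁ y₂
    rw [NNReal.coe_one, one_mul, dist_eq_norm, dist_eq_norm]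
    have := proj_lipschitz (hproj (toE.symm y₁)) (hproj (toE.symm y₂))
    rwa [LinearEquiv.apply_symm_apply, LinearEquiv.apply_symm_apply] at this
  have hhcont : Continuous (fun ξ : Vec m => toE (Aadj ξ + Z)) := by
    have e : (fun ξ : Vec m => toE (Aadj ξ + Z)) =
        fun ξ => (toE.toLinearMap ∘ₗ Aadj) ξ + toE Z := by
      funext ξ; rw [map_add]; rfl
    rw [e]
    exact ((toE.toLinearMap ∘ₗ Aadj).continuous_of_finiteDimensional).add continuous_const
  have hgcont : Continuous (fun ξ : Vec m => toE (proj (Aadj ξ + Z))) := by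
    have e : (fun ξ : Vec m => toE (proj (Aadj ξ + Z))) =
        (fun y => toE (proj (toE.symm y))) ∘ (fun ξ => toE (Aadj ξ + Z)) := by
      funext ξ
      simp only [Function.comp_apply, LinearEquiv.symm_apply_apply]
    rw [e]
    exact hFlip.continuous.comp hhcont
  have hφcont : Continuous φ := by
    have e : φ = fun ξ => 1 / 2 * ‖toE (proj (Aadj ξ + Z))‖ ^ 2 - ⟪b, ξ⟫ := by
      funext ξ
      show (1 / 2) * mNorm (proj (Aadj ξ + Z)) ^ 2 - ⟪b, ξ⟫ = _
      rw [norm_toE]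
    rw [e]
    exact (continuous_const.mul ((hgcont.norm).pow 2)).sub
      (continuous_const.inner continuous_id)
  have hclosed : IsClosed {ξ : Vec m | φ ξ ≤ φ ξ0} := isClosed_le hφcont continuous_const
  -- constants
  obtain ⟨c, hc, hlow⟩ := exists_psd_lower hXdag
  set B : Vec m →ₗ[ℝ] Emat n := toE.toLinearMap ∘ₗ Aadj with hB
  have hker : LinearMap.ker B = ⊥ := by
    rw [LinearMap.ker_eq_bot']
    intro ξ hξ
    have hA0 : Aadj ξ = 0 := by
      have h0 : toE (Aadj ξ) = 0 := hξ
      simpa using congrArg toE.symm h0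
    have hall : ∀ X, ⟪A X, ξ⟫ = 0 := fun X => by
      rw [hadj, hA0, mInner_eq_sum]; simp
    obtain ⟨X₀, hX₀⟩ := hsurj ξ
    have := hall X₀
    rw [hX₀] at this
    exact inner_self_eq_zero.mp this
  obtain ⟨K, hKpos, hKanti⟩ := B.exists_antilipschitzWith hker
  have hxi_bound : ∀ ξ : Vec m, ‖ξ‖ ≤ K * ‖B ξ‖ := by
    intro ξ
    have := hKanti.le_mul_dist ξ 0
    simpa [dist_eq_norm, map_zero] using this
  set a : ℝ := ‖toE Xdag‖ with ha
  set d : ℝ := ⟪toE Xdag, toE Z⟫ with hd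
  set z : ℝ := ‖toE Z‖ with hz
  set L : ℝ := φ ξ0 with hL
  set s : ℝ := Real.sqrt (2 * |L - d|) with hs
  set V : ℝ := (L - d + a ^ 2 / 2) / c with hV
  set R : ℝ := K * ((2 * a + s) + V + z) with hR
  have hsub : {ξ : Vec m | φ ξ ≤ φ ξ0} ⊆ Metric.closedBall 0 R := by
    intro ξ hξ
    have hub : φ ξ ≤ L := hξ
    set W : Matrix (Fin n) (Fin n) ℝ := Aadj ξ + Z with hW
    set P : Matrix (Fin n) (Fin n) ℝ := proj W with hP
    have hPP : IsProjPSD W P := hproj W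
    set N : Matrix (Fin n) (Fin n) ℝ := P - W with hN
    have hWs : W.IsSymm := (hAadjSymm ξ).add hZ
    have hNpsd : N.PosSemidef := proj_residual_psd hPP hWs
    set u : ℝ := ‖toE P‖ with hu
    set v : ℝ := ‖toE N‖ with hv
    have hAadjE : toE (Aadj ξ) = toE P - toE N - toE Z := by
      have e : Aadj ξ = P - N - Z := by rw [hN, hW]; abel
      rw [e, map_sub, map_sub]
    have hphi : φ ξ = 1 / 2 * u ^ 2 - (⟪toE Xdag, toE P⟫ - mInner Xdag N - d) := by
      show (1 / 2) * mNorm (proj (Aadj ξ + Z)) ^ 2 - ⟪b, ξ⟫ = _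
      have h1 : ⟪b, ξ⟫ = mInner Xdag (Aadj ξ) := by rw [← hAXdag, hadj]
      have h2 : mInner Xdag (Aadj ξ) = ⟪toE Xdag, toE P⟫ - mInner Xdag N - d := by
        rw [← inner_toE, hAadjE, inner_sub_right, inner_sub_right, ← inner_toE, hd]
      rw [h1, h2, ← norm_toE]
    have hcs : ⟪toE Xdag, toE P⟫ ≤ a * u := real_inner_le_norm _ _
    have hcN : c * v ≤ mInner Xdag N := by
      have := hlow N hNpsd
      rwa [← norm_toE] at this
    have key1 : 1 / 2 * u ^ 2 - a * u + c * v + d ≤ L := by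
      rw [hphi] at hub
      linarith
    have hv0 : 0 ≤ v := norm_nonneg _
    have hu0 : 0 ≤ u := norm_nonneg _
    have ha0 : 0 ≤ a := norm_nonneg _
    clear_value W P N u v a d z L s V R
    have hvV : v ≤ V := by
      have hcv : c * v ≤ L - d + a ^ 2 / 2 := by nlinarith [sq_nonneg (a - u)]
      rw [hV, le_div_iff₀ hc]
      linarith [hcv]
    have hs0 : 0 ≤ s := hs ▸ Real.sqrt_nonneg _
    have hs2 : s ^ 2 = 2 * |L - d| := by rw [hs]; exact Real.sq_sqrt (by positivity)
    have hu2 : u ^ 2 ≤ 2 * (L - d) + 2 * a * u := by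
      have hcv0 : 0 ≤ c * v := mul_nonneg hc.le hv0
      nlinarith [key1, hcv0]
    have huU : u ≤ 2 * a + s := by
      by_contra hcon
      push_neg at hcon
      have habs : 2 * (L - d) ≤ s ^ 2 := by
        rw [hs2]
        have := le_abs_self (L - d)
        linarith
      nlinarith
    have hBx : ‖B ξ‖ ≤ u + v + z := by
      have hBeq : B ξ = toE P - toE N - toE Z := hAadjE
      rw [hBeq]
      calc ‖toE P - toE N - toE Z‖ ≤ ‖toE P - toE N‖ + ‖toE Z‖ := norm_sub_le _ _
      _ ≤ u + v + z := by
          have := norm_sub_le (toE P) (toE N)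
          rw [hu, hv, hz]
          linarith
    have hfin : ‖ξ‖ ≤ R := by
      calc ‖ξ‖ ≤ K * ‖B ξ‖ := hxi_bound ξ
      _ ≤ K * ((2 * a + s) + V + z) := by
          apply mul_le_mul_of_nonneg_left _ K.coe_nonneg
          linarith
      _ = R := hR.symm
    simpa [Metric.mem_closedBall, dist_eq_norm] using hfin
  exact Metric.isCompact_of_isClosed_isBounded hclosed
    (Bornology.IsBounded.subset Metric.isBounded_closedBall hsub)
end
end
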